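/- Fix an integer g ≥ 1 and let (Q_1,…,Q_{g+1},W_1,…,W_{g+1}) ∈ ℝ^{2(g+1)} satisfy Σ_{i=1}^{g+1} Q_i < Σ_{i=1}^{g+1} W_i, and let (Q'_i, W'_i) be its image under the UD-pToda map. Then the minimum over all 2(g+1) coordinates is preserved: min(min_{1≤i≤g+1} Q'_i, min_{1≤i≤g+1} W'_i) = min(min_{1≤i≤g+1} Q_i, min_{1≤i≤g+1} W_i); that is, the conserved quantity C_g is invariant. -/

import Mathlib

open Fin.NatCast

/-- `X_i = min_{k=0,…,g} Σ_{l=1}^{k} (W_{i−l} − Q_{i−l})` of the ultra-discrete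
periodic Toda lattice (indices cyclic mod `g+1`; the `k = 0` term is `0`). -/
noncomputable def udX (g : ℕ) (Q W : Fin (g + 1) → ℝ) (i : Fin (g + 1)) : ℝ :=
  (Finset.range (g + 1)).inf' (Finset.nonempty_range_iff.mpr g.succ_ne_zero)
    fun k => ∑ l ∈ Finset.Icc 1 k,
      (W (i - (l : Fin (g + 1))) - Q (i - (l : Fin (g + 1))))

lemma udX_nonpos (g : ℕ) (Q W : Fin (g + 1) → ℝ) (i : Fin (g + 1)) :
    udX g Q W i ≤ 0 := by
  have h0 : (0 : ℕ) ∈ Finset.range (g + 1) := Finset.mem_range.mpr g.succ_pos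
  unfold udX
  refine le_trans (Finset.inf'_le _ h0) ?_
  simp

/-- The UD-pToda map preserves the conserved quantity
`C_g = min(min_i Q_i, min_i W_i)`. -/
theorem udpToda_preserves_Cg (g : ℕ) (hg : 1 ≤ g) (Q W Q' W' : Fin (g + 1) → ℝ)
    (h : (∑ i, Q i) < ∑ i, W i)
    (hQ' : ∀ i : Fin (g + 1), Q' i = min (W i) (Q i - udX g Q W i))
    (hW' : ∀ i : Fin (g + 1), W' i = Q (i + 1) + W i - Q' i) :
    min (Finset.univ.inf' Finset.univ_nonempty Q')
        (Finset.univ.inf' Finset.univ_nonempty W') =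
    min (Finset.univ.inf' Finset.univ_nonempty Q)
        (Finset.univ.inf' Finset.univ_nonempty W) := by
  set mQ := Finset.univ.inf' Finset.univ_nonempty Q with hmQ
  set mW := Finset.univ.inf' Finset.univ_nonempty W with hmW
  set C := min mQ mW with hC
  have hCQ : ∀ i, C ≤ Q i := fun i =>
    le_trans (min_le_left _ _) (Finset.inf'_le Q (Finset.mem_univ i))
  have hCW : ∀ i, C ≤ W i := fun i =>
    le_trans (min_le_right _ _) (Finset.inf'_le W (Finset.mem_univ i))
  have hQ'leW : ∀ i, Q' i ≤ W i := fun i => by rw [hQ' i]; exact min_le_left _ _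
  have hCQ' : ∀ i, C ≤ Q' i := by
    intro i
    rw [hQ' i]
    refine le_min (hCW i) ?_
    have := udX_nonpos g Q W i
    have := hCQ i
    linarith
  have hCW' : ∀ i, C ≤ W' i := by
    intro i
    rw [hW' i]
    have := hQ'leW i
    have := hCQ (i + 1)
    linarith
  have hge : C ≤ min (Finset.univ.inf' Finset.univ_nonempty Q')
      (Finset.univ.inf' Finset.univ_nonempty W') :=
    le_min (Finset.le_inf' _ _ fun i _ => hCQ' i)
      (Finset.le_inf' _ _ fun i _ => hCW' i)
  refine le_antisymm ?_ hge
  -- it suffices to exhibit one new coordinate that is ≤ C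
  by_cases hcase : mW ≤ mQ
  · -- C = mW, and at a minimizer j of W we have Q' j ≤ W j = mW = C
    obtain ⟨j, -, hj⟩ := Finset.exists_mem_eq_inf' (Finset.univ_nonempty) W
    have hQ'j : Q' j ≤ C := by
      rw [hQ' j, hC, min_eq_right hcase, hmW, hj]
      exact min_le_left _ _
    exact le_trans (min_le_left _ _)
      (le_trans (Finset.inf'_le Q' (Finset.mem_univ j)) hQ'j)
  · push_neg at hcase
    have hCeq : C = mQ := min_eq_left hcase.le
    obtain ⟨j, -, hj⟩ := Finset.exists_mem_eq_inf' (Finset.univ_nonempty) Q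
    by_cases hX : 0 ≤ udX g Q W j
    · have hQ'j : Q' j ≤ C := by
        rw [hQ' j, hCeq, hmQ, hj]
        calc min (W j) (Q j - udX g Q W j) ≤ Q j - udX g Q W j := min_le_right _ _
          _ ≤ Q j := by linarith
      exact le_trans (min_le_left _ _)
        (le_trans (Finset.inf'_le Q' (Finset.mem_univ j)) hQ'j)
    · push_neg at hX
      -- the minimum defining X j is attained at some k, which must be ≥ 1
      obtain ⟨k, hkmem, hkeq⟩ := Finset.exists_mem_eq_inf'
        (Finset.nonempty_range_iff.mpr g.succ_ne_zero)
        (fun k => ∑ l ∈ Finset.Icc 1 k,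
          (W (j - (l : Fin (g + 1))) - Q (j - (l : Fin (g + 1)))))
      rw [← udX] at hkeq
      have hSk : (∑ l ∈ Finset.Icc 1 k,
          (W (j - (l : Fin (g + 1))) - Q (j - (l : Fin (g + 1))))) < 0 :=
        hkeq ▸ hX
      have hk1 : 1 ≤ k := by
        by_contra hk0
        interval_cases k
        simp at hSk
      set i : Fin (g + 1) := j - 1 with hidef
      -- sum identity : the Icc 1 (k-1) partial sum at i equals S_k minus the l = 1 term
      have hshift : ∀ l : ℕ, i - (l : Fin (g + 1)) = j - ((l + 1 : ℕ) : Fin (g + 1)) := by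
        intro l
        rw [hidef]
        push_cast
        open Fin.CommRing in ring
      have hsum : (∑ l ∈ Finset.Icc 1 (k - 1),
            (W (i - (l : Fin (g + 1))) - Q (i - (l : Fin (g + 1)))))
          = (∑ l ∈ Finset.Icc 1 k,
            (W (j - (l : Fin (g + 1))) - Q (j - (l : Fin (g + 1)))))
          - (W (j - 1) - Q (j - 1)) := by
        have e1 : (∑ l ∈ Finset.Icc 1 (k - 1),
              (W (i - (l : Fin (g + 1))) - Q (i - (l : Fin (g + 1)))))
            = ∑ l ∈ Finset.Icc 1 (k - 1),
              (W (j - ((l + 1 : ℕ) : Fin (g + 1))) - Q (j - ((l + 1 : ℕ) : Fin (g + 1)))) := by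
          refine Finset.sum_congr rfl fun l _ => by rw [hshift l]
        have e2 : (∑ l ∈ Finset.Icc 1 (k - 1),
              (W (j - ((l + 1 : ℕ) : Fin (g + 1))) - Q (j - ((l + 1 : ℕ) : Fin (g + 1)))))
            = ∑ l ∈ Finset.Icc 2 k,
              (W (j - (l : Fin (g + 1))) - Q (j - (l : Fin (g + 1)))) := by
          have hset : Finset.Icc 2 k = (Finset.Icc 1 (k - 1)).map (addRightEmbedding 1) := by
            rw [Finset.map_add_right_Icc]
            congr 1 <;> omega
          rw [hset, Finset.sum_map]
          simp [addRightEmbedding]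
        have e3 : Finset.Icc 1 k = insert 1 (Finset.Icc 2 k) := by
          ext x
          simp only [Finset.mem_Icc, Finset.mem_insert]
          omega
        rw [e1, e2, e3, Finset.sum_insert (by simp)]
        push_cast
        ring
      -- X i ≤ Q i - W i, hence Q' i = W i and W' i = Q j = C
      have hkm1 : k - 1 ∈ Finset.range (g + 1) := by
        rw [Finset.mem_range] at hkmem ⊢; omega
      have hXi : udX g Q W i ≤ Q i - W i := by
        have hle : udX g Q W i ≤ ∑ l ∈ Finset.Icc 1 (k - 1),
            (W (i - (l : Fin (g + 1))) - Q (i - (l : Fin (g + 1)))) := by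
          unfold udX
          exact Finset.inf'_le _ hkm1
        have hi1 : W (j - 1) = W i := by rw [hidef]
        have hi2 : Q (j - 1) = Q i := by rw [hidef]
        rw [hsum, hi1, hi2] at hle
        linarith
      have hQ'i : Q' i = W i := by
        rw [hQ' i]
        exact min_eq_left (by linarith)
      have hi1j : i + 1 = j := by rw [hidef]; open Fin.CommRing in ring
      have hW'i : W' i = Q j := by rw [hW' i, hQ'i, hi1j]; ring
      have : W' i ≤ C := by rw [hW'i, hCeq, hmQ, hj]
      exact le_trans (min_le_right _ _)
        (le_trans (Finset.inf'_le W' (Finset.mem_univ i)) this)
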